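/- arXiv:2403.15099 — 7 statements merged into one kernel-verified Lean document; each statement's English description precedes it below -/
import Mathlib

section
/- Let 0 < γ < 1 and 0 < π01, π11 < 1. The 3×4 matrix with rows c0 = [(1-γ)(1-π00), γ(1-π11), (1-γ)π00, γπ11], c1 = [π10-1, 1-π11, -π10, π11], c2 = [1-π00, π01-1, π00, -π01] has rank 3 if (1-γ)π01 + γπ11 < 1 (assuming π00 ≠ π10 and π01 ≠ π11). -/
theorem stmt_0 (γ π00 π01 π10 π11 : ℝ)
    (hγ : 0 < γ) (hγ1 : γ < 1)
    (h01 : 0 < π01) (h011 : π01 < 1)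
    (h11 : 0 < π11) (h111 : π11 < 1)
    (hne0 : π00 ≠ π10) (hne1 : π01 ≠ π11)
    (hs1 : (1 - γ) * π01 + γ * π11 < 1) :
    (Matrix.of ![![(1 - γ) * (1 - π00), γ * (1 - π11), (1 - γ) * π00, γ * π11],
       ![π10 - 1, 1 - π11, -π10, π11],
       ![1 - π00, π01 - 1, π00, -π01]] : Matrix (Fin 3) (Fin 4) ℝ).rank = 3 := by
  set M : Matrix (Fin 3) (Fin 4) ℝ :=
    (Matrix.of ![![(1 - γ) * (1 - π00), γ * (1 - π11), (1 - γ) * π00, γ * π11],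
       ![π10 - 1, 1 - π11, -π10, π11],
       ![1 - π00, π01 - 1, π00, -π01]]) with hM
  set E : Matrix (Fin 4) (Fin 3) ℝ :=
    (Matrix.of ![![1,0,0], ![0,1,0], ![0,0,1], ![0,0,0]]) with hE
  set N : Matrix (Fin 3) (Fin 3) ℝ :=
    (Matrix.of ![![(1 - γ) * (1 - π00), γ * (1 - π11), (1 - γ) * π00],
       ![π10 - 1, 1 - π11, -π10],
       ![1 - π00, π01 - 1, π00]]) with hN
  have hME : M * E = N := by
    ext i j
    fin_cases i <;> fin_cases j <;>
      simp [hM, hE, hN, Matrix.mul_apply, Fin.sum_univ_four, Matrix.vecHead, Matrix.vecTail]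
  have hdet : N.det = (π00 - π10) * (1 - ((1 - γ) * π01 + γ * π11)) := by
    simp [hN, Matrix.det_fin_three]
    ring
  have hdet0 : N.det ≠ 0 := by
    rw [hdet]
    exact mul_ne_zero (sub_ne_zero.mpr hne0) (by linarith)
  have hNrank : N.rank = 3 := by
    rw [Matrix.rank_of_isUnit N ((Matrix.isUnit_iff_isUnit_det N).mpr
      (isUnit_iff_ne_zero.mpr hdet0))]
    simp
  have hge : 3 ≤ M.rank := by
    calc (3 : ℕ) = N.rank := hNrank.symm
    _ = (M * E).rank := by rw [hME]
    _ ≤ M.rank := Matrix.rank_mul_le_left M E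
  have hle : M.rank ≤ 3 := by
    simpa using M.rank_le_card_height
  omega
end

section
/- Let γ, π00, π01, π10, π11 ∈ (0,1) with π00 < π10, π01 < π11, and set s0 = (1-γ)π00 + γπ10, s1 = (1-γ)π01 + γπ11, and assume s1 < 1. Define p00, p01, p10 as functions of p11 by: p01(p11) = (-p11·s1 - γ + 1)/(1 - s1), p00(p11) = [-p11(π11-π01)s0 + γ(π00π01 - 2π00π11 + π00 + π10π11 - π10) + π00(π11-π01)]/[(π10-π00)(1-s1)], p10(p11) = [p11(π11-π01)(1-s0) + γ(π00π01 - 2π00π11 + π00 - π01 + π10π11 - π10 + π11) - (1-π00)(π11-π01)]/[(π10-π00)(1-s1)]. Then ∂p00/∂p11 < 0, ∂p01/∂p11 < 0, and ∂p10/∂p11 > 0. -/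
lemma deriv_linear (A B x : ℝ) : deriv (fun t : ℝ => t * A + B) x = A := by
  have h : HasDerivAt (fun t : ℝ => t * A + B) A x := by
    simpa using ((hasDerivAt_id x).mul_const A).add_const B
  exact h.deriv

theorem stmt_1 (γ π00 π01 π10 π11 : ℝ)
    (hγ : 0 < γ) (hγ1 : γ < 1)
    (h00 : 0 < π00) (h001 : π00 < 1)
    (h01 : 0 < π01) (h011 : π01 < 1)
    (h10 : 0 < π10) (h101 : π10 < 1)
    (h11 : 0 < π11) (h111 : π11 < 1)
    (hlt0 : π00 < π10) (hlt1 : π01 < π11)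
    (s0 s1 : ℝ)
    (hs0 : s0 = (1 - γ) * π00 + γ * π10)
    (hs1 : s1 = (1 - γ) * π01 + γ * π11)
    (hs1lt : s1 < 1) :
    (∀ x : ℝ, deriv (fun p11 : ℝ =>
      (-p11 * (π11 - π01) * s0 + γ * (π00 * π01 - 2 * π00 * π11 + π00 + π10 * π11 - π10)
        + π00 * (π11 - π01)) / ((π10 - π00) * (1 - s1))) x < 0) ∧
    (∀ x : ℝ, deriv (fun p11 : ℝ => (-p11 * s1 - γ + 1) / (1 - s1)) x < 0) ∧
    (∀ x : ℝ, deriv (fun p11 : ℝ =>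
      (p11 * (π11 - π01) * (1 - s0) + γ * (π00 * π01 - 2 * π00 * π11 + π00 - π01
        + π10 * π11 - π10 + π11) - (1 - π00) * (π11 - π01)) / ((π10 - π00) * (1 - s1))) x > 0) := by
  have hs1' : (0:ℝ) < 1 - s1 := by linarith
  have hden : (0:ℝ) < (π10 - π00) * (1 - s1) := by
    apply mul_pos (by linarith) hs1'
  have hs0pos : 0 < s0 := by
    rw [hs0]; nlinarith
  have hs0lt : s0 < 1 := by
    rw [hs0]; nlinarith
  have hs1pos : 0 < s1 := by
    rw [hs1]; nlinarith
  refine ⟨fun x => ?_, fun x => ?_, fun x => ?_⟩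
  · have heq : (fun p11 : ℝ =>
      (-p11 * (π11 - π01) * s0 + γ * (π00 * π01 - 2 * π00 * π11 + π00 + π10 * π11 - π10)
        + π00 * (π11 - π01)) / ((π10 - π00) * (1 - s1)))
      = fun t : ℝ => t * (-(π11 - π01) * s0 / ((π10 - π00) * (1 - s1)))
        + (γ * (π00 * π01 - 2 * π00 * π11 + π00 + π10 * π11 - π10)
          + π00 * (π11 - π01)) / ((π10 - π00) * (1 - s1)) := by
      funext t; field_simp; ring
    rw [heq, deriv_linear]
    apply div_neg_of_neg_of_pos _ hden
    nlinarith
  · have heq : (fun p11 : ℝ => (-p11 * s1 - γ + 1) / (1 - s1))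
      = fun t : ℝ => t * (-s1 / (1 - s1)) + (-γ + 1) / (1 - s1) := by
      funext t; field_simp; ring
    rw [heq, deriv_linear]
    apply div_neg_of_neg_of_pos (by linarith) hs1'
  · have heq : (fun p11 : ℝ =>
      (p11 * (π11 - π01) * (1 - s0) + γ * (π00 * π01 - 2 * π00 * π11 + π00 - π01
        + π10 * π11 - π10 + π11) - (1 - π00) * (π11 - π01)) / ((π10 - π00) * (1 - s1)))
      = fun t : ℝ => t * ((π11 - π01) * (1 - s0) / ((π10 - π00) * (1 - s1)))
        + (γ * (π00 * π01 - 2 * π00 * π11 + π00 - π01 + π10 * π11 - π10 + π11)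
          - (1 - π00) * (π11 - π01)) / ((π10 - π00) * (1 - s1)) := by
      funext t; field_simp; ring
    rw [heq, deriv_linear]
    apply div_pos _ hden
    nlinarith
end

section
/- Let γ, π00, π01, π10, π11 ∈ (0,1) with π00 ≤ π10 ≤ π11, π00 ≤ π01 ≤ π11, and π01·π10 ≠ π00·π11. Consider the linear program: minimize (1-γ)(1-π00)p00 + γ(1-π11)p01 + (1-γ)π00·p10 + γπ11·p11 subject to (π10-1)p00 + (1-π11)p01 - π10·p10 + π11·p11 ≥ 1, (1-π00)p00 + (π01-1)p01 + π00·p10 - π01·p11 ≥ -1, and p00, p01, p10, p11 ≥ 0. Then the optimal value equals γ. -/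
theorem stmt_3 (γ π00 π01 π10 π11 : ℝ)
    (hγ : 0 < γ) (hγ1 : γ < 1)
    (h00 : 0 < π00) (h001 : π00 < 1)
    (h01 : 0 < π01) (h011 : π01 < 1)
    (h10 : 0 < π10) (h101 : π10 < 1)
    (h11 : 0 < π11) (h111 : π11 < 1)
    (ha1 : π00 ≤ π10) (ha2 : π10 ≤ π11) (ha3 : π00 ≤ π01) (ha4 : π01 ≤ π11)
    (hne : π01 * π10 ≠ π00 * π11) :
    IsLeast { v : ℝ | ∃ p00 p01 p10 p11 : ℝ,
      0 ≤ p00 ∧ 0 ≤ p01 ∧ 0 ≤ p10 ∧ 0 ≤ p11 ∧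
      (π10 - 1) * p00 + (1 - π11) * p01 - π10 * p10 + π11 * p11 ≥ 1 ∧
      (1 - π00) * p00 + (π01 - 1) * p01 + π00 * p10 - π01 * p11 ≥ -1 ∧
      v = (1 - γ) * (1 - π00) * p00 + γ * (1 - π11) * p01
            + (1 - γ) * π00 * p10 + γ * π11 * p11 } γ := by
  constructor
  · exact ⟨0, 1, 0, 1, le_refl 0, zero_le_one, le_refl 0, zero_le_one,
      by nlinarith, by nlinarith, by ring⟩
  · rintro v ⟨p00, p01, p10, p11, hp00, hp01, hp10, hp11, hc1, hc2, hv⟩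
    nlinarith [mul_nonneg hp00 (sub_nonneg.2 ha1), mul_nonneg hγ.le hp00,
      mul_nonneg hγ.le hp10, mul_nonneg hp00 h00.le,
      mul_nonneg (mul_nonneg hγ.le hp00) (sub_pos.2 h101).le,
      mul_nonneg (mul_nonneg (sub_pos.2 hγ1).le hp00) (sub_pos.2 h001).le,
      mul_nonneg (mul_nonneg (sub_pos.2 hγ1).le hp10) h00.le,
      mul_nonneg (mul_nonneg hγ.le hp10) h10.le]
end

section
/- Let γ, π00, π01, π10, π11 ∈ (0,1) with π01 ≤ π11. For every t ∈ [0,1], the point (p00, p01, p10, p11) = (0, t, 0, 1/π11 - t(1-π11)/π11) is feasible for the non-negative payment LP (i.e., satisfies both incentive constraints and non-negativity) and achieves objective value γ. -/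
theorem stmt_4 (γ π00 π01 π10 π11 : ℝ)
    (hγ : 0 < γ) (hγ1 : γ < 1)
    (h00 : 0 < π00) (h001 : π00 < 1)
    (h01 : 0 < π01) (h011 : π01 < 1)
    (h10 : 0 < π10) (h101 : π10 < 1)
    (h11 : 0 < π11) (h111 : π11 < 1)
    (hle : π01 ≤ π11)
    (t : ℝ) (ht0 : 0 ≤ t) (ht1 : t ≤ 1) :
    let p00 : ℝ := 0
    let p01 : ℝ := t
    let p10 : ℝ := 0
    let p11 : ℝ := 1 / π11 - t * (1 - π11) / π11
    (0 ≤ p00 ∧ 0 ≤ p01 ∧ 0 ≤ p10 ∧ 0 ≤ p11) ∧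
    (π10 - 1) * p00 + (1 - π11) * p01 - π10 * p10 + π11 * p11 ≥ 1 ∧
    (1 - π00) * p00 + (π01 - 1) * p01 + π00 * p10 - π01 * p11 ≥ -1 ∧
    (1 - γ) * (1 - π00) * p00 + γ * (1 - π11) * p01
      + (1 - γ) * π00 * p10 + γ * π11 * p11 = γ := by
  intro p00 p01 p10 p11
  have hne : π11 ≠ 0 := ne_of_gt h11
  have key : p11 * π11 = 1 - t * (1 - π11) := by
    simp only [p11]; field_simp
  have hp11 : 0 ≤ p11 := by nlinarith
  refine ⟨⟨le_refl 0, ht0, le_refl 0, hp11⟩, ?_, ?_, ?_⟩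
  · simp only [p00, p01, p10]; nlinarith
  · simp only [p00, p01, p10]; nlinarith [mul_nonneg hp11 (sub_nonneg.2 hle)]
  · simp only [p00, p01, p10]; nlinarith
end

section
/- Let γ, w0, w1, π01, π11 ∈ (0,1) with π01 ≤ π11. Define m* = γ and m_w* = γ(1 - π01·w1/π11 - w0) + π01·w1/π11. Then m* < m_w* if and only if π01·w1/(π11·w0 + π01·w1) > γ. -/
theorem stmt_6 (γ w0 w1 π01 π11 : ℝ)
    (hγ : 0 < γ) (hγ1 : γ < 1)
    (hw0 : 0 < w0) (hw01 : w0 < 1)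
    (hw1 : 0 < w1) (hw11 : w1 < 1)
    (h01 : 0 < π01) (h011 : π01 < 1)
    (h11 : 0 < π11) (h111 : π11 < 1)
    (hle : π01 ≤ π11) :
    γ < γ * (1 - π01 * w1 / π11 - w0) + π01 * w1 / π11 ↔
      π01 * w1 / (π11 * w0 + π01 * w1) > γ := by
  have hd : (0:ℝ) < π11 * w0 + π01 * w1 := by positivity
  rw [gt_iff_lt, lt_div_iff₀ hd,
    show γ * (1 - π01 * w1 / π11 - w0) + π01 * w1 / π11 =
      (γ * (π11 - π01 * w1 - w0 * π11) + π01 * w1) / π11 by field_simp,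
    lt_div_iff₀ h11]
  constructor <;> intro h <;> nlinarith
end

section
/- Let g: ℝ → ℝ be a strictly increasing concave bijection with g positive on positive arguments, and let γ, π00, π01, π10, π11 ∈ (0,1) with π00 ≤ π01 ≤ π11 and π00 ≤ π10 ≤ π11. Then W = (w00, w01, w10, w11) = (0, 1, 0, 1) is an optimal solution of: minimize (1-γ)(1-π00)g^{-1}(w00) + γ(1-π11)g^{-1}(w01) + (1-γ)π00·g^{-1}(w10) + γπ11·g^{-1}(w11) subject to (π10-1)w00 + (1-π11)w01 - π10·w10 + π11·w11 ≥ 1, (1-π00)w00 + (π01-1)w01 + π00·w10 - π01·w11 ≥ -1, and w ≥ 0; the optimal value is (1-γ)(1-π00)g^{-1}(0) + γ(1-π11)g^{-1}(1) + (1-γ)π00·g^{-1}(0) + γπ11·g^{-1}(1). -/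
theorem stmt_8 (g : ℝ → ℝ)
    (hmono : StrictMono g) (hconc : ConcaveOn ℝ Set.univ g)
    (hbij : Function.Bijective g) (hpos : ∀ x : ℝ, 0 < x → 0 < g x)
    (γ π00 π01 π10 π11 : ℝ)
    (hγ : 0 < γ) (hγ1 : γ < 1)
    (h00 : 0 < π00) (h001 : π00 < 1)
    (h01 : 0 < π01) (h011 : π01 < 1)
    (h10 : 0 < π10) (h101 : π10 < 1)
    (h11 : 0 < π11) (h111 : π11 < 1)
    (ha1 : π00 ≤ π01) (ha2 : π01 ≤ π11) (ha3 : π00 ≤ π10) (ha4 : π10 ≤ π11) :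
    let ginv := Function.invFun g
    let obj : ℝ → ℝ → ℝ → ℝ → ℝ := fun w00 w01 w10 w11 =>
      (1 - γ) * (1 - π00) * ginv w00 + γ * (1 - π11) * ginv w01
        + (1 - γ) * π00 * ginv w10 + γ * π11 * ginv w11
    let feasible : ℝ → ℝ → ℝ → ℝ → Prop := fun w00 w01 w10 w11 =>
      0 ≤ w00 ∧ 0 ≤ w01 ∧ 0 ≤ w10 ∧ 0 ≤ w11 ∧
      (π10 - 1) * w00 + (1 - π11) * w01 - π10 * w10 + π11 * w11 ≥ 1 ∧
      (1 - π00) * w00 + (π01 - 1) * w01 + π00 * w10 - π01 * w11 ≥ -1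
    feasible 0 1 0 1 ∧
    (∀ w00 w01 w10 w11 : ℝ, feasible w00 w01 w10 w11 →
      obj 0 1 0 1 ≤ obj w00 w01 w10 w11) ∧
    obj 0 1 0 1 = (1 - γ) * (1 - π00) * ginv 0 + γ * (1 - π11) * ginv 1
        + (1 - γ) * π00 * ginv 0 + γ * π11 * ginv 1 := by
  intro ginv obj feasible
  have hg : ∀ x : ℝ, g (ginv x) = x := fun x => Function.rightInverse_invFun hbij.2 x
  have hgl : ∀ x : ℝ, ginv (g x) = x := fun x => Function.leftInverse_invFun hbij.1 x
  have hfmono : Monotone ginv := by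
    intro x y hxy
    by_contra h
    push_neg at h
    have := hmono h
    rw [hg, hg] at this
    linarith
  have hfle : ∀ (π x y : ℝ), 0 ≤ π → π ≤ 1 →
      ginv ((1 - π) * x + π * y) ≤ (1 - π) * ginv x + π * ginv y := by
    intro π x y h0 h1
    have key := hconc.2 (Set.mem_univ (ginv x)) (Set.mem_univ (ginv y))
      (by linarith : (0:ℝ) ≤ 1 - π) h0 (by ring)
    simp only [smul_eq_mul, hg] at key
    have := hfmono key
    rwa [hgl] at this
  refine ⟨⟨le_refl 0, by norm_num, le_refl 0, by norm_num, by norm_num, by norm_num⟩, ?_, by ring⟩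
  intro w00 w01 w10 w11 ⟨hn00, hn01, hn10, hn11, hc1, hc2⟩
  set A := (1 - π00) * w00 + π00 * w10 with hA
  set B := (1 - π11) * w01 + π11 * w11 with hB
  have hA0 : (0:ℝ) ≤ A := by nlinarith
  have hB1 : (1:ℝ) ≤ B := by nlinarith
  have h1 := hfle π00 w00 w10 h00.le h001.le
  have h2 := hfle π11 w01 w11 h11.le h111.le
  have h3 : ginv 0 ≤ ginv A := hfmono hA0
  have h4 : ginv 1 ≤ ginv B := hfmono hB1
  show (1 - γ) * (1 - π00) * ginv 0 + γ * (1 - π11) * ginv 1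
        + (1 - γ) * π00 * ginv 0 + γ * π11 * ginv 1 ≤
      (1 - γ) * (1 - π00) * ginv w00 + γ * (1 - π11) * ginv w01
        + (1 - γ) * π00 * ginv w10 + γ * π11 * ginv w11
  rw [← hA] at h1; rw [← hB] at h2
  nlinarith [mul_le_mul_of_nonneg_left (h3.trans h1) (by linarith : (0:ℝ) ≤ 1 - γ),
    mul_le_mul_of_nonneg_left (h4.trans h2) hγ.le]
end

section
/- Let g(x) = √x on [0,∞) extended to a bijection (e.g., g(x) = x for x < 0). In the risk-averse agent model with this g, the optimal contract pays g^{-1}(0) = 0 for low expenditure and g^{-1}(1) = 1 for high expenditure, irrespective of outcome, and the optimal expected payment is γπ11·1 + γ(1-π11)·1 = γ (for parameters γ, π_{sj} ∈ (0,1) with π00 ≤ π01 ≤ π11 and π00 ≤ π10 ≤ π11). -/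
theorem stmt_18 (γ π00 π01 π10 π11 : ℝ)
    (hγ : 0 < γ) (hγ1 : γ < 1)
    (h00 : 0 < π00) (h001 : π00 < 1)
    (h01 : 0 < π01) (h011 : π01 < 1)
    (h10 : 0 < π10) (h101 : π10 < 1)
    (h11 : 0 < π11) (h111 : π11 < 1)
    (ha1 : π00 ≤ π01) (ha2 : π01 ≤ π11) (ha3 : π00 ≤ π10) (ha4 : π10 ≤ π11) :
    let g : ℝ → ℝ := fun x => if x < 0 then x else Real.sqrt x
    let ginv := Function.invFun g
    let obj : ℝ → ℝ → ℝ → ℝ → ℝ := fun w00 w01 w10 w11 =>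
      (1 - γ) * (1 - π00) * ginv w00 + γ * (1 - π11) * ginv w01
        + (1 - γ) * π00 * ginv w10 + γ * π11 * ginv w11
    let feasible : ℝ → ℝ → ℝ → ℝ → Prop := fun w00 w01 w10 w11 =>
      0 ≤ w00 ∧ 0 ≤ w01 ∧ 0 ≤ w10 ∧ 0 ≤ w11 ∧
      (π10 - 1) * w00 + (1 - π11) * w01 - π10 * w10 + π11 * w11 ≥ 1 ∧
      (1 - π00) * w00 + (π01 - 1) * w01 + π00 * w10 - π01 * w11 ≥ -1
    ginv 0 = 0 ∧ ginv 1 = 1 ∧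
    feasible 0 1 0 1 ∧
    (∀ w00 w01 w10 w11 : ℝ, feasible w00 w01 w10 w11 →
      obj 0 1 0 1 ≤ obj w00 w01 w10 w11) ∧
    obj 0 1 0 1 = γ * π11 * 1 + γ * (1 - π11) * 1 ∧
    γ * π11 * 1 + γ * (1 - π11) * 1 = γ := by
  intro g ginv obj feasible
  have hinj : Function.Injective g := by
    intro x y hxy
    simp only [g] at hxy
    rcases lt_or_ge x 0 with hx | hx <;> rcases lt_or_ge y 0 with hy | hy
    · simpa [hx, hy] using hxy
    · rw [if_pos hx, if_neg (not_lt.mpr hy)] at hxy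
      exact absurd (hxy ▸ Real.sqrt_nonneg y) (not_le.mpr hx)
    · rw [if_neg (not_lt.mpr hx), if_pos hy] at hxy
      exact absurd (hxy ▸ Real.sqrt_nonneg x) (not_le.mpr hy)
    · rw [if_neg (not_lt.mpr hx), if_neg (not_lt.mpr hy)] at hxy
      exact (Real.sqrt_inj hx hy).mp hxy
  have hginv : ∀ y : ℝ, 0 ≤ y → ginv y = y ^ 2 := by
    intro y hy
    have hg : g (y ^ 2) = y := by
      simp only [g, if_neg (not_lt.mpr (sq_nonneg y))]
      rw [Real.sqrt_sq hy]
    have h := Function.leftInverse_invFun hinj (y ^ 2)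
    rw [hg] at h
    exact h
  have h0 : ginv 0 = 0 := by rw [hginv 0 le_rfl]; ring
  have h1 : ginv 1 = 1 := by rw [hginv 1 zero_le_one]; ring
  refine ⟨h0, h1, ⟨le_rfl, zero_le_one, le_rfl, zero_le_one, by nlinarith, by nlinarith⟩,
    ?_, by simp only [obj, h0, h1]; ring, by ring⟩
  intro w00 w01 w10 w11 ⟨hw00, hw01, hw10, hw11, hc1, hc2⟩
  simp only [obj, h0, h1, hginv w00 hw00, hginv w01 hw01, hginv w10 hw10, hginv w11 hw11]
  have hs : 1 ≤ (1 - π11) * w01 + π11 * w11 := by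
    nlinarith [mul_nonneg hw00 (sub_nonneg.mpr h101.le), mul_nonneg hw10 h10.le]
  have hJ : ((1 - π11) * w01 + π11 * w11) ^ 2 ≤ (1 - π11) * w01 ^ 2 + π11 * w11 ^ 2 := by
    nlinarith [mul_nonneg (mul_nonneg h11.le (sub_nonneg.mpr h111.le)) (sq_nonneg (w01 - w11))]
  have hs2 : 1 ≤ ((1 - π11) * w01 + π11 * w11) ^ 2 := by nlinarith
  have hK : 1 ≤ (1 - π11) * w01 ^ 2 + π11 * w11 ^ 2 := hs2.trans hJ
  nlinarith [mul_le_mul_of_nonneg_left hK hγ.le,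
    mul_nonneg (mul_nonneg (sub_nonneg.mpr hγ1.le) (sub_nonneg.mpr h001.le)) (sq_nonneg w00),
    mul_nonneg (mul_nonneg (sub_nonneg.mpr hγ1.le) h00.le) (sq_nonneg w10)]
end
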